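/- A minimal monomial sequence f_1,...,f_n is an unconditional proper sequence (every permutation is a proper sequence) if and only if there exist monomials d, g_1,...,g_n with f_i = d·g_i for all i and g_1,...,g_n pairwise coprime. -/

import Mathlib

open MvPolynomial

/-- `f_0,…,f_{n-1}` (0-based) is a proper sequence if
`f_r · H_1(f_0,…,f_{r-1}; R) = 0` for every `r`: every Koszul 1-cycle `v`
supported on the first `r` elements, multiplied by `f_r`, lies in the
submodule generated by the Koszul boundaries `f_j e_i - f_i e_j`
(`i < j < r`). -/
def IsProperSequence {R : Type*} [CommRing R] {n : ℕ} (f : Fin n → R) : Prop :=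
  ∀ r : Fin n, ∀ v : Fin n → R,
    (∀ j, r ≤ j → v j = 0) → (∑ j, v j * f j = 0) →
      (fun j => f r * v j) ∈ Submodule.span R
        {w : Fin n → R | ∃ i j : Fin n, i < j ∧ j < r ∧
          w = Pi.single i (f j) - Pi.single j (f i)}


private lemma sum_single_mul' {K : Type*} [Field K] {m n : ℕ} (i : Fin n)
    (p : MvPolynomial (Fin m) K) (q : Fin n → MvPolynomial (Fin m) K) :
    ∑ l, (Pi.single i p : Fin n → MvPolynomial (Fin m) K) l * q l = p * q i := by
  rw [Finset.sum_eq_single i]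
  · simp
  · intro b _ hb
    simp [Pi.single_eq_of_ne hb]
  · simp

private lemma key_ind {K : Type*} [Field K] {m n : ℕ} (d : Fin m →₀ ℕ)
    (g : Fin n → (Fin m →₀ ℕ)) (hg : ∀ i j : Fin n, i ≠ j → g i ⊓ g j = 0)
    (r : Fin n) :
    ∀ N : ℕ, ∀ v : Fin n → MvPolynomial (Fin m) K,
      (∑ j, (v j).support.card) ≤ N →
      (∀ j, r ≤ j → v j = 0) →
      (∑ j, v j * monomial (d + g j) (1:K)) = 0 →
      (fun j => monomial (d + g r) (1:K) * v j) ∈ Submodule.span (MvPolynomial (Fin m) K)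
        {w : Fin n → MvPolynomial (Fin m) K | ∃ i j : Fin n, i < j ∧ j < r ∧
          w = Pi.single i (monomial (d + g j) (1:K)) - Pi.single j (monomial (d + g i) (1:K))} := by
  intro N
  induction N using Nat.strong_induction_on with
  | _ N IH =>
  intro v hcard hsupp hcyc
  by_cases hz : ∀ j, v j = 0
  · have h0 : (fun j => monomial (d + g r) (1:K) * v j) = 0 := by
      funext j; simp [hz j]
    rw [h0]; exact Submodule.zero_mem _
  push_neg at hz
  obtain ⟨j0, hj0⟩ := hz
  obtain ⟨u, hu⟩ := (Finset.nonempty_of_ne_empty (mt MvPolynomial.support_eq_empty.mp hj0) : (v j0).support.Nonempty)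
  rw [MvPolynomial.mem_support_iff] at hu
  set b : Fin m →₀ ℕ := u + (d + g j0) with hb
  have hbj0 : d + g j0 ≤ b := le_add_self
  have hbu : b - (d + g j0) = u := add_tsub_cancel_right _ _
  have hsum0 : ∑ l, coeff b (v l * monomial (d + g l) (1:K)) = 0 := by
    rw [← coeff_sum, hcyc, coeff_zero]
  have htj0 : coeff b (v j0 * monomial (d + g j0) (1:K)) = coeff u (v j0) := by
    rw [coeff_mul_monomial', if_pos hbj0, hbu, mul_one]
  have hk : ∃ k, k ≠ j0 ∧ coeff b (v k * monomial (d + g k) (1:K)) ≠ 0 := by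
    by_contra h
    push_neg at h
    rw [Finset.sum_eq_single_of_mem j0 (Finset.mem_univ j0)
      (fun k _ hk => h k hk)] at hsum0
    rw [htj0] at hsum0
    exact hu hsum0
  obtain ⟨k, hkj0, hkc⟩ := hk
  rw [coeff_mul_monomial'] at hkc
  by_cases hbk : d + g k ≤ b
  swap
  · rw [if_neg hbk] at hkc; exact absurd rfl hkc
  rw [if_pos hbk, mul_one] at hkc
  -- positions are below r
  have hj0r : j0 < r := lt_of_not_ge fun h => hj0 (hsupp _ h)
  have hkr : k < r := by
    refine lt_of_not_ge fun h => hkc ?_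
    rw [hsupp _ h, coeff_zero]
  have hne : j0 ≠ k := Ne.symm hkj0
  set c : K := coeff u (v j0) with hc
  set A : MvPolynomial (Fin m) K := monomial u (1:K) with hA
  set B : MvPolynomial (Fin m) K := monomial (b - (d + g k)) (1:K) with hB
  set s : Fin n → MvPolynomial (Fin m) K :=
    fun l => (Pi.single j0 A : Fin n → MvPolynomial (Fin m) K) l
      - (Pi.single k B : Fin n → MvPolynomial (Fin m) K) l with hs
  set v' : Fin n → MvPolynomial (Fin m) K := fun l => v l - C c * s l with hv'
  have hsj0 : s j0 = A := by
    simp [hs, Pi.single_eq_same, Pi.single_eq_of_ne hne]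
  have hsk : s k = -B := by
    simp [hs, Pi.single_eq_same, Pi.single_eq_of_ne hkj0]
  have hsl : ∀ l, l ≠ j0 → l ≠ k → s l = 0 := by
    intro l h1 h2
    simp [hs, Pi.single_eq_of_ne h1, Pi.single_eq_of_ne h2]
  have hsupp' : ∀ l, r ≤ l → v' l = 0 := by
    intro l hl
    have h1 : l ≠ j0 := fun h => absurd hl (h ▸ not_le.mpr hj0r)
    have h2 : l ≠ k := fun h => absurd hl (h ▸ not_le.mpr hkr)
    simp [hv', hsupp l hl, hsl l h1 h2]
  have hcyc' : ∑ l, v' l * monomial (d + g l) (1:K) = 0 := by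
    have hssum : ∑ l, s l * monomial (d + g l) (1:K) = 0 := by
      simp only [hs, sub_mul]
      rw [Finset.sum_sub_distrib, sum_single_mul', sum_single_mul', hA, hB,
        monomial_mul, monomial_mul, one_mul, tsub_add_cancel_of_le hbk, ← hb, sub_self]
    calc ∑ l, v' l * monomial (d + g l) (1:K)
        = ∑ l, v l * monomial (d + g l) (1:K)
          - C c * ∑ l, s l * monomial (d + g l) (1:K) := by
          rw [Finset.mul_sum, ← Finset.sum_sub_distrib]
          congr 1; funext l; rw [hv']; ring
      _ = 0 := by rw [hcyc, hssum, mul_zero, sub_zero]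
  have hcj0 : (v' j0).support.card < (v j0).support.card := by
    have husup : u ∈ (v j0).support := by rwa [MvPolynomial.mem_support_iff]
    have hsub : (v' j0).support ⊆ (v j0).support.erase u := by
      intro w hw
      rw [MvPolynomial.mem_support_iff] at hw
      by_cases hwu : w = u
      · exfalso
        apply hw
        rw [hwu, hv']
        simp only [hsj0, hA, coeff_sub, coeff_C_mul, coeff_monomial, if_pos rfl, mul_one]
        simp [← hc]
      · rw [Finset.mem_erase]
        refine ⟨hwu, ?_⟩
        rw [MvPolynomial.mem_support_iff]
        rw [hv'] at hw
        simpa [hsj0, hA, coeff_sub, coeff_C_mul, coeff_monomial,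
          if_neg (Ne.symm hwu)] using hw
    calc (v' j0).support.card ≤ ((v j0).support.erase u).card := Finset.card_le_card hsub
      _ < (v j0).support.card := Finset.card_erase_lt_of_mem husup
  have hck : (v' k).support.card ≤ (v k).support.card := by
    apply Finset.card_le_card
    intro w hw
    rw [MvPolynomial.mem_support_iff] at hw ⊢
    by_cases hwb : w = b - (d + g k)
    · rwa [hwb]
    · rw [hv'] at hw
      simpa [hsk, hB, coeff_sub, coeff_C_mul, coeff_monomial,
        if_neg (Ne.symm hwb)] using hw
  have hmu : ∑ l, (v' l).support.card < ∑ l, (v l).support.card := by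
    apply Finset.sum_lt_sum
    · intro l _
      by_cases h1 : l = j0
      · exact h1 ▸ le_of_lt hcj0
      by_cases h2 : l = k
      · exact h2 ▸ hck
      · rw [show v' l = v l by simp [hv', hsl l h1 h2]]
    · exact ⟨j0, Finset.mem_univ _, hcj0⟩
  have hIH := IH _ (lt_of_lt_of_le hmu hcard) v' le_rfl hsupp' hcyc'
  -- the multiple of s lies in the span
  have hcop := hg j0 k hne
  have hle2 : (d + g j0) + (d + g k) ≤ (d + g r) + b := by
    intro x
    have h1 := hbj0 x
    have h2 := hbk x
    have h3 : (g j0) x ⊓ (g k) x = 0 := by rw [← Finsupp.inf_apply, hcop]; rfl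
    rw [show ∀ a b : ℕ, a ⊓ b = min a b from fun _ _ => rfl] at h3
    simp only [Finsupp.add_apply, Finsupp.coe_add, Pi.add_apply] at h1 h2 ⊢
    omega
  set e : Fin m →₀ ℕ := (d + g r) + b - ((d + g j0) + (d + g k)) with he
  have heq1 : (d + g r) + (b - (d + g j0)) = e + (d + g k) := by
    ext x
    have h1 := hbj0 x
    have h2 := hbk x
    have h3 := hle2 x
    simp only [Finsupp.add_apply, Finsupp.coe_add, Pi.add_apply,
      Finsupp.tsub_apply, he] at h1 h2 h3 ⊢
    omega
  have heq2 : (d + g r) + (b - (d + g k)) = e + (d + g j0) := by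
    ext x
    have h1 := hbj0 x
    have h2 := hbk x
    have h3 := hle2 x
    simp only [Finsupp.add_apply, Finsupp.coe_add, Pi.add_apply,
      Finsupp.tsub_apply, he] at h1 h2 h3 ⊢
    omega
  have hw : (fun l => monomial (d + g r) (1:K) * s l)
      = monomial e (1:K) • ((Pi.single j0 (monomial (d + g k) (1:K)) : Fin n → MvPolynomial (Fin m) K)
          - (Pi.single k (monomial (d + g j0) (1:K)) : Fin n → MvPolynomial (Fin m) K)) := by
    funext l
    by_cases h1 : l = j0
    · subst h1
      simp only [hsj0, hA, Pi.smul_apply, Pi.sub_apply, Pi.single_eq_same,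
        Pi.single_eq_of_ne hne, sub_zero, smul_eq_mul, monomial_mul, one_mul]
      rw [← hbu]
      exact congrArg (fun t => monomial t (1:K)) heq1
    by_cases h2 : l = k
    · subst h2
      simp only [hsk, hB, Pi.smul_apply, Pi.sub_apply, Pi.single_eq_same,
        Pi.single_eq_of_ne hkj0, zero_sub, smul_eq_mul, mul_neg, monomial_mul, one_mul]
      exact congrArg (fun t => -(monomial t (1:K))) heq2
    · simp [hsl l h1 h2, Pi.single_eq_of_ne h1, Pi.single_eq_of_ne h2]
  have hgenmem : ((Pi.single j0 (monomial (d + g k) (1:K)) : Fin n → MvPolynomial (Fin m) K)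
          - (Pi.single k (monomial (d + g j0) (1:K)) : Fin n → MvPolynomial (Fin m) K))
      ∈ Submodule.span (MvPolynomial (Fin m) K)
        {w : Fin n → MvPolynomial (Fin m) K | ∃ i j : Fin n, i < j ∧ j < r ∧
          w = Pi.single i (monomial (d + g j) (1:K)) - Pi.single j (monomial (d + g i) (1:K))} := by
    rcases lt_or_gt_of_ne hne with hlt | hgt
    · exact Submodule.subset_span ⟨j0, k, hlt, hkr, rfl⟩
    · rw [show (Pi.single j0 (monomial (d + g k) (1:K)) : Fin n → MvPolynomial (Fin m) K)
          - (Pi.single k (monomial (d + g j0) (1:K)) : Fin n → MvPolynomial (Fin m) K)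
        = -((Pi.single k (monomial (d + g j0) (1:K)) : Fin n → MvPolynomial (Fin m) K)
          - (Pi.single j0 (monomial (d + g k) (1:K)) : Fin n → MvPolynomial (Fin m) K)) from (neg_sub _ _).symm]
      exact Submodule.neg_mem _ (Submodule.subset_span ⟨k, j0, hgt, hj0r, rfl⟩)
  have hsmem : (fun l => monomial (d + g r) (1:K) * s l) ∈ Submodule.span (MvPolynomial (Fin m) K)
        {w : Fin n → MvPolynomial (Fin m) K | ∃ i j : Fin n, i < j ∧ j < r ∧
          w = Pi.single i (monomial (d + g j) (1:K)) - Pi.single j (monomial (d + g i) (1:K))} := by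
    rw [hw]
    exact Submodule.smul_mem _ _ hgenmem
  have hfin : (fun l => monomial (d + g r) (1:K) * v l)
      = (fun l => monomial (d + g r) (1:K) * v' l)
        + (C c : MvPolynomial (Fin m) K) • (fun l => monomial (d + g r) (1:K) * s l) := by
    funext l
    simp only [Pi.add_apply, Pi.smul_apply, smul_eq_mul, hv']
    ring
  rw [hfin]
  exact Submodule.add_mem _ hIH (Submodule.smul_mem _ _ hsmem)


private lemma exists_perm3 {n : ℕ} (i j k : Fin n) (hij : i ≠ j) (hik : i ≠ k)
    (hjk : j ≠ k) (h2 : 2 < n) :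
    ∃ σ : Equiv.Perm (Fin n),
      σ ⟨0, by omega⟩ = i ∧ σ ⟨1, by omega⟩ = j ∧ σ ⟨2, h2⟩ = k := by
  set z0 : Fin n := ⟨0, by omega⟩ with hz0
  set z1 : Fin n := ⟨1, by omega⟩ with hz1
  set z2 : Fin n := ⟨2, h2⟩ with hz2
  have h01 : z0 ≠ z1 := by simp [hz0, hz1, Fin.ext_iff]
  have h02 : z0 ≠ z2 := by simp [hz0, hz2, Fin.ext_iff]
  have h12 : z1 ≠ z2 := by simp [hz1, hz2, Fin.ext_iff]
  set t1 := Equiv.swap z0 i with ht1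
  set j' := t1.symm j with hj'
  set t2 := Equiv.swap z1 j' with ht2
  set k' := t2.symm (t1.symm k) with hk'
  set t3 := Equiv.swap z2 k' with ht3
  have hj'0 : j' ≠ z0 := by
    intro h
    have h' := congrArg t1 h
    rw [hj', Equiv.apply_symm_apply, ht1, Equiv.swap_apply_left] at h'
    exact hij h'.symm
  have ht2z0 : t2 z0 = z0 := by
    rw [ht2, Equiv.swap_apply_of_ne_of_ne h01 (Ne.symm hj'0)]
  have hk'0 : k' ≠ z0 := by
    intro h
    have h' := congrArg (fun x => t1 (t2 x)) h
    simp only [hk', Equiv.apply_symm_apply] at h'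
    rw [ht2z0, ht1, Equiv.swap_apply_left] at h'
    exact hik h'.symm
  have hk'1 : k' ≠ z1 := by
    intro h
    have h' := congrArg (fun x => t1 (t2 x)) h
    simp only [hk', Equiv.apply_symm_apply] at h'
    rw [ht2, Equiv.swap_apply_left, hj', Equiv.apply_symm_apply] at h'
    exact hjk h'.symm
  refine ⟨t3.trans (t2.trans t1), ?_, ?_, ?_⟩
  · show t1 (t2 (t3 z0)) = i
    rw [ht3, Equiv.swap_apply_of_ne_of_ne h02 (Ne.symm hk'0), ht2z0, ht1,
      Equiv.swap_apply_left]
  · show t1 (t2 (t3 z1)) = j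
    rw [ht3, Equiv.swap_apply_of_ne_of_ne h12 (Ne.symm hk'1), ht2,
      Equiv.swap_apply_left, hj', Equiv.apply_symm_apply]
  · show t1 (t2 (t3 z2)) = k
    rw [ht3, Equiv.swap_apply_left, hk', Equiv.apply_symm_apply,
      Equiv.apply_symm_apply]

private lemma inf_le_of_unconditional {K : Type*} [Field K] {m n : ℕ}
    (a : Fin n → (Fin m →₀ ℕ)) (f : Fin n → MvPolynomial (Fin m) K)
    (hf : ∀ i, f i = monomial (a i) 1)
    (hprop : ∀ σ : Equiv.Perm (Fin n), IsProperSequence (f ∘ σ))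
    (i j k : Fin n) (hij : i ≠ j) (hik : i ≠ k) (hjk : j ≠ k) :
    a i ⊓ a j ≤ a k := by
  have h2 : 2 < n := by
    have h1 := Fin.val_ne_of_ne hij
    have h2 := Fin.val_ne_of_ne hik
    have h3 := Fin.val_ne_of_ne hjk
    have := i.isLt; have := j.isLt; have := k.isLt
    omega
  obtain ⟨σ, hs0, hs1, hs2⟩ := exists_perm3 i j k hij hik hjk h2
  set z0 : Fin n := ⟨0, by omega⟩ with hz0
  set z1 : Fin n := ⟨1, by omega⟩ with hz1
  set z2 : Fin n := ⟨2, h2⟩ with hz2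
  have h01 : z0 ≠ z1 := by simp [hz0, hz1, Fin.ext_iff]
  set D : Fin m →₀ ℕ := a i ⊓ a j with hD
  have hDi : D ≤ a i := inf_le_left
  have hDj : D ≤ a j := inf_le_right
  set v : Fin n → MvPolynomial (Fin m) K :=
    fun l => (Pi.single z0 (monomial (a j - D) (1:K)) : Fin n → MvPolynomial (Fin m) K) l
      - (Pi.single z1 (monomial (a i - D) (1:K)) : Fin n → MvPolynomial (Fin m) K) l with hv
  have hvs : ∀ l, z2 ≤ l → v l = 0 := by
    intro l hl
    rw [Fin.le_def] at hl
    have hl' : 2 ≤ (l : ℕ) := hl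
    have e1 : l ≠ z0 := by rw [Fin.ne_iff_vne]; show (l : ℕ) ≠ 0; omega
    have e2 : l ≠ z1 := by rw [Fin.ne_iff_vne]; show (l : ℕ) ≠ 1; omega
    simp [hv, Pi.single_eq_of_ne e1, Pi.single_eq_of_ne e2]
  have hvc : ∑ l, v l * (f ∘ σ) l = 0 := by
    simp only [hv, sub_mul]
    rw [Finset.sum_sub_distrib, sum_single_mul', sum_single_mul']
    simp only [Function.comp_apply, hs0, hs1, hf i, hf j, monomial_mul, one_mul]
    rw [show (a j - D) + a i = (a i - D) + a j by
      ext x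
      have u1 := hDi x
      have u2 := hDj x
      simp only [Finsupp.add_apply, Finsupp.coe_add, Pi.add_apply, Finsupp.tsub_apply] at u1 u2 ⊢
      omega]
    exact sub_self _
  have hm := hprop σ z2 v hvs hvc
  have hset : {w : Fin n → MvPolynomial (Fin m) K | ∃ p q : Fin n, p < q ∧ q < z2 ∧
      w = Pi.single p ((f ∘ σ) q) - Pi.single q ((f ∘ σ) p)}
      = {(Pi.single z0 ((f ∘ σ) z1) : Fin n → MvPolynomial (Fin m) K)
          - (Pi.single z1 ((f ∘ σ) z0) : Fin n → MvPolynomial (Fin m) K)} := by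
    ext w
    constructor
    · rintro ⟨p, q, hpq, hq2, rfl⟩
      rw [Fin.lt_def] at hpq hq2
      rw [hz2] at hq2
      have hp : p = z0 := Fin.ext (by rw [hz0]; simp at hq2 ⊢; omega)
      have hq : q = z1 := Fin.ext (by rw [hz1]; simp at hq2 ⊢; omega)
      rw [hp, hq]
      rfl
    · rintro h
      rw [Set.mem_singleton_iff] at h
      refine ⟨z0, z1, ?_, ?_, h⟩
      · rw [hz0, hz1]; exact Fin.mk_lt_mk.mpr (by omega)
      · rw [hz1, hz2]; exact Fin.mk_lt_mk.mpr (by omega)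
  rw [hset, Submodule.mem_span_singleton] at hm
  obtain ⟨cc, hcc⟩ := hm
  have h0' := congrFun hcc z0
  simp only [Pi.smul_apply, Pi.sub_apply, Pi.single_eq_same,
    Pi.single_eq_of_ne h01, sub_zero, smul_eq_mul, Function.comp_apply,
    hs0, hs1, hs2] at h0'
  rw [hv] at h0'
  simp only [Pi.sub_apply, Pi.single_eq_same, Pi.single_eq_of_ne h01, sub_zero] at h0'
  -- h0' : cc * f j = f k * monomial (a j - D) 1
  have hdvd : f j ∣ monomial (a k + (a j - D)) (1:K) := by
    refine ⟨cc, ?_⟩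
    rw [hf k, monomial_mul, one_mul] at h0'
    rw [← h0', mul_comm]
  rw [hf j, monomial_dvd_monomial] at hdvd
  obtain ⟨h1, -⟩ := hdvd
  rcases h1 with h1 | h1
  · exact absurd h1 one_ne_zero
  · intro x
    have u1 := h1 x
    have u2 := hDj x
    simp only [Finsupp.add_apply, Finsupp.coe_add, Pi.add_apply, Finsupp.tsub_apply,
      Finsupp.inf_apply, hD] at u1 u2 ⊢
    omega


private lemma proper_of_decomp {K : Type*} [Field K] {m n : ℕ} (d : Fin m →₀ ℕ)
    (g : Fin n → (Fin m →₀ ℕ)) (f : Fin n → MvPolynomial (Fin m) K)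
    (hf : ∀ i, f i = monomial (d + g i) 1)
    (hg : ∀ i j : Fin n, i ≠ j → g i ⊓ g j = 0) : IsProperSequence f := by
  intro r v hsupp hcyc
  simp only [hf] at hcyc ⊢
  exact key_ind d g hg r _ v le_rfl hsupp hcyc

/-- A minimal monomial sequence `f_1,…,f_n` is an unconditional proper sequence
(every permutation is a proper sequence) iff there exist monomials
`d, g_1,…,g_n` with `f_i = d·g_i` for all `i` and `g_1,…,g_n` pairwise
coprime. -/
theorem stmt_9 {K : Type*} [Field K] {m n : ℕ} (a : Fin n → (Fin m →₀ ℕ))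
    (f : Fin n → MvPolynomial (Fin m) K) (hf : ∀ i, f i = monomial (a i) 1)
    (hmin : ∀ i j : Fin n, i ≠ j → ¬f i ∣ f j) :
    (∀ σ : Equiv.Perm (Fin n), IsProperSequence (f ∘ σ)) ↔
      ∃ (d : Fin m →₀ ℕ) (g : Fin n → (Fin m →₀ ℕ)),
        (∀ i, f i = monomial d 1 * monomial (g i) 1) ∧
          ∀ i j : Fin n, i ≠ j → g i ⊓ g j = 0 := by
  constructor
  · intro hprop
    by_cases hn : n ≤ 1
    · refine ⟨0, a, fun i => ?_, fun i j hij => ?_⟩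
      · rw [hf i, monomial_mul, one_mul, zero_add]
      · refine absurd (Fin.ext ?_) hij
        have := i.isLt; have := j.isLt
        omega
    push_neg at hn
    set i0 : Fin n := ⟨0, by omega⟩ with hi0
    set i1 : Fin n := ⟨1, hn⟩ with hi1
    have hne01 : i0 ≠ i1 := by simp [hi0, hi1, Fin.ext_iff]
    set d : Fin m →₀ ℕ := a i0 ⊓ a i1 with hd
    have key1 : ∀ p q t : Fin n, p ≠ q → a p ⊓ a q ≤ a t := by
      intro p q t hpq
      by_cases h1 : t = p
      · rw [h1]; exact inf_le_left
      by_cases h2 : t = q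
      · rw [h2]; exact inf_le_right
      · exact inf_le_of_unconditional a f hf hprop p q t hpq (Ne.symm h1) (Ne.symm h2)
    have hdall : ∀ p q : Fin n, p ≠ q → a p ⊓ a q = d := by
      intro p q hpq
      refine le_antisymm ?_ ?_
      · rw [hd]; exact le_inf (key1 p q i0 hpq) (key1 p q i1 hpq)
      · rw [hd]; exact le_inf (key1 i0 i1 p hne01) (key1 i0 i1 q hne01)
    have hdle : ∀ p, d ≤ a p := by
      intro p
      by_cases h : p = i0
      · rw [h, hd]; exact inf_le_left
      · rw [← hdall p i0 h]; exact inf_le_left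
    refine ⟨d, fun p => a p - d, fun p => ?_, fun p q hpq => ?_⟩
    · rw [hf p, monomial_mul, one_mul, add_tsub_cancel_of_le (hdle p)]
    · ext x
      have u1 := (hdle p) x
      have u2 := (hdle q) x
      have u3 : (a p ⊓ a q) x = d x := by rw [hdall p q hpq]
      simp only [Finsupp.inf_apply, Finsupp.tsub_apply, Finsupp.coe_zero,
        Pi.zero_apply] at u3 ⊢
      omega
  · rintro ⟨d, g, hfd, hg⟩ σ
    have hfd' : ∀ p, (f ∘ σ) p = monomial (d + g (σ p)) (1:K) := by
      intro p
      simp only [Function.comp_apply, hfd (σ p), monomial_mul, one_mul]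
    have hg' : ∀ p q : Fin n, p ≠ q → g (σ p) ⊓ g (σ q) = 0 :=
      fun p q hpq => hg _ _ (fun h => hpq (σ.injective h))
    exact proper_of_decomp d (fun p => g (σ p)) (f ∘ σ) hfd' hg'
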